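/- Let X and Y be metric spaces and f : X → Y a continuous, open surjection such that f⁻¹(y) is finite for every y ∈ Y. Then the covering dimensions of X and Y are equal. -/

import Mathlib

open Set ENNReal Topology

universe u v w

/-- Covering dimension `≤ n`: every open cover has an open refinement in which
every point lies in at most `n+1` members (valid characterization for metric spaces). -/
def CoverDimLE (X : Type*) [TopologicalSpace X] (n : ℕ) : Prop :=
  ∀ U : Set (Set X), (∀ u ∈ U, IsOpen u) → ⋃₀ U = Set.univ →
    ∃ V : Set (Set X), (∀ v ∈ V, IsOpen v) ∧ ⋃₀ V = Set.univ ∧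
      (∀ v ∈ V, ∃ u ∈ U, v ⊆ u) ∧ ∀ x : X, {v ∈ V | x ∈ v}.encard ≤ n + 1

namespace DimAux

lemma encard_le_of_injOn {α : Type*} {β : Type*} (f : α → β) {s : Set α} {t : Set β}
    (h1 : Set.MapsTo f s t) (h2 : Set.InjOn f s) : s.encard ≤ t.encard := by
  rw [← h2.encard_image]
  exact Set.encard_le_encard (Set.image_subset_iff.2 h1)

/-- Bound the multiplicity of a family at a point by that of another family,
given a pointwise "witness" map between index sets. -/
lemma encard_index_le {ι : Type*} {κ : Type*} {P : ι → Prop} {Q : κ → Prop}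
    (g : ∀ i, P i → κ) (hQ : ∀ i (h : P i), Q (g i h))
    (hinj : ∀ i j (hi : P i) (hj : P j), g i hi = g j hj → i = j) :
    {i | P i}.encard ≤ {k | Q k}.encard := by
  classical
  rcases Set.eq_empty_or_nonempty {i | P i} with h | ⟨i₀, hi₀⟩
  · simp [h]
  · set f : ι → κ := fun i => if h : P i then g i h else g i₀ hi₀ with hf
    refine encard_le_of_injOn f ?_ ?_
    · intro i hi
      simp only [Set.mem_setOf_eq] at hi ⊢
      show Q (if h : P i then g i h else g i₀ hi₀)
      rw [dif_pos hi]
      exact hQ i hi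
    · intro i hi j hj hij
      simp only [Set.mem_setOf_eq] at hi hj
      change (if h : P i then g i h else g i₀ hi₀) = (if h : P j then g j h else g i₀ hi₀) at hij
      rw [dif_pos hi, dif_pos hj] at hij
      exact hinj i j hi hj hij

/-- Relative covering dimension of a subset `S` of an ambient space `Z`. -/
def RelDim {Z : Type u} [TopologicalSpace Z] (S : Set Z) (n : ℕ) : Prop :=
  ∀ (ι : Type u) (G : ι → Set Z), (∀ i, IsOpen (G i)) → S ⊆ ⋃ i, G i →
    ∃ V : ι → Set Z, (∀ i, IsOpen (V i)) ∧ (∀ i, V i ⊆ G i) ∧ (S ⊆ ⋃ i, V i) ∧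
      ∀ x ∈ S, {i | x ∈ V i}.encard ≤ n + 1

variable {Z : Type u} [TopologicalSpace Z] {n : ℕ}

/-- Apply `RelDim` to a cover indexed by a type in an arbitrary universe. -/
lemma RelDim.elim {S : Set Z} (h : RelDim S n) {ι : Type w} (G : ι → Set Z)
    (hGo : ∀ i, IsOpen (G i)) (hGc : S ⊆ ⋃ i, G i) :
    ∃ V : ι → Set Z, (∀ i, IsOpen (V i)) ∧ (∀ i, V i ⊆ G i) ∧ (S ⊆ ⋃ i, V i) ∧
      ∀ x ∈ S, {i | x ∈ V i}.encard ≤ n + 1 := by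
  classical
  set r : Set (Set Z) := Set.range G with hr
  have hsec : ∀ g : r, ∃ j : ι, G j = (g : Set Z) := fun g => g.2.imp (fun _ h => h)
  choose c hc using hsec
  obtain ⟨V, hVo, hVs, hVc, hVe⟩ :=
    h r (fun g => (g : Set Z)) (by rintro ⟨g, j, rfl⟩; exact hGo j)
      (fun x hx => by
        rcases Set.mem_iUnion.1 (hGc hx) with ⟨j, hj⟩
        exact Set.mem_iUnion.2 ⟨⟨G j, Set.mem_range_self j⟩, hj⟩)
  refine ⟨fun j => ⋃ (g : r) (_ : c g = j), V g, ?_, ?_, ?_, ?_⟩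
  · intro j; exact isOpen_iUnion fun g => isOpen_iUnion fun _ => hVo g
  · intro j
    refine Set.iUnion_subset fun g => Set.iUnion_subset fun hg => ?_
    refine (hVs g).trans ?_
    rw [← hg, hc]
  · intro x hx
    rcases Set.mem_iUnion.1 (hVc hx) with ⟨g, hg⟩
    exact Set.mem_iUnion.2 ⟨c g, Set.mem_iUnion.2 ⟨g, Set.mem_iUnion.2 ⟨rfl, hg⟩⟩⟩
  · intro x hx
    refine le_trans ?_ (hVe x hx)
    have : ∀ j, x ∈ ⋃ (g : r) (_ : c g = j), V g → ∃ g : r, c g = j ∧ x ∈ V g := by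
      intro j hj
      rcases Set.mem_iUnion.1 hj with ⟨g, hg⟩
      rcases Set.mem_iUnion.1 hg with ⟨hcg, hxg⟩
      exact ⟨g, hcg, hxg⟩
    refine encard_index_le (fun j hj => (this j hj).choose) ?_ ?_
    · intro j hj; exact (this j hj).choose_spec.2
    · intro i j hi hj hij
      change (this i hi).choose = (this j hj).choose at hij
      have h1 := (this i hi).choose_spec.1
      have h2 := (this j hj).choose_spec.1
      rw [← h1, ← h2, hij]

/-- `CoverDimLE` in terms of `RelDim univ`. -/
lemma coverDimLE_iff_relDim_univ : CoverDimLE Z n ↔ RelDim (univ : Set Z) n := by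
  classical
  constructor
  · intro h ι G hGo hGc
    obtain ⟨V, hVo, hVc, hVr, hVe⟩ := h (Set.range G) (by rintro u ⟨i, rfl⟩; exact hGo i)
      (by
        rw [Set.sUnion_range]
        exact Set.eq_univ_of_univ_subset hGc)
    -- choose for each `v ∈ V` an index
    have hidx : ∀ v : V, ∃ i : ι, (v : Set Z) ⊆ G i := by
      rintro ⟨v, hv⟩
      rcases hVr v hv with ⟨u, ⟨i, rfl⟩, hsub⟩
      exact ⟨i, hsub⟩
    choose c hc using hidx
    refine ⟨fun i => ⋃ (v : V) (_ : c v = i), (v : Set Z), ?_, ?_, ?_, ?_⟩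
    · intro i; exact isOpen_iUnion fun v => isOpen_iUnion fun _ => hVo v v.2
    · intro i
      refine Set.iUnion_subset fun v => Set.iUnion_subset fun hv => ?_
      rw [← hv]; exact hc v
    · intro x _
      have : x ∈ ⋃₀ V := by rw [hVc]; trivial
      rcases this with ⟨v, hv, hxv⟩
      exact Set.mem_iUnion.2 ⟨c ⟨v, hv⟩, Set.mem_iUnion.2 ⟨⟨v, hv⟩, Set.mem_iUnion.2 ⟨rfl, hxv⟩⟩⟩
    · intro x _
      refine le_trans ?_ (hVe x)
      have hw : ∀ i, x ∈ ⋃ (v : V) (_ : c v = i), (v : Set Z) →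
          ∃ v : V, c v = i ∧ x ∈ (v : Set Z) := by
        intro i hi
        rcases Set.mem_iUnion.1 hi with ⟨v, hv⟩
        rcases Set.mem_iUnion.1 hv with ⟨hcv, hxv⟩
        exact ⟨v, hcv, hxv⟩
      refine encard_index_le (fun i hi => ((hw i hi).choose : Set Z)) ?_ ?_
      · intro i hi
        exact ⟨(hw i hi).choose.2, (hw i hi).choose_spec.2⟩
      · intro i j hi hj hij
        change ((hw i hi).choose : Set Z) = ((hw j hj).choose : Set Z) at hij
        have h1 := (hw i hi).choose_spec.1
        have h2 := (hw j hj).choose_spec.1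
        rw [← h1, ← h2]
        congr 1
        exact Subtype.ext hij
  · intro h U hUo hUc
    obtain ⟨V, hVo, hVs, hVc, hVe⟩ := h U (fun u => (u : Set Z)) (fun u => hUo u u.2)
      (by
        intro x _
        have : x ∈ ⋃₀ U := by rw [hUc]; trivial
        rcases this with ⟨u, hu, hxu⟩
        exact Set.mem_iUnion.2 ⟨⟨u, hu⟩, hxu⟩)
    refine ⟨Set.range V, by rintro v ⟨u, rfl⟩; exact hVo u, ?_, ?_, ?_⟩
    · rw [Set.sUnion_range]
      exact Set.eq_univ_of_univ_subset (fun x hx => hVc hx)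
    · rintro v ⟨u, rfl⟩
      exact ⟨u, u.2, hVs u⟩
    · intro x
      refine le_trans ?_ (hVe x trivial)
      refine encard_index_le (P := fun v => v ∈ Set.range V ∧ x ∈ v)
        (fun v hv => hv.1.choose) ?_ ?_
      · intro v hv
        have := hv.1.choose_spec
        show x ∈ V hv.1.choose
        rw [this]
        exact hv.2
      · intro v w hv hw hvw
        change hv.1.choose = hw.1.choose at hvw
        rw [← hv.1.choose_spec, ← hw.1.choose_spec, hvw]

/-- The trace of `RelDim` on a relatively closed subset. -/
lemma RelDim.closed_inter {S : Set Z} (h : RelDim S n) {C : Set Z} (hC : IsClosed C) :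
    RelDim (S ∩ C) n := by
  classical
  intro ι G hGo hGc
  obtain ⟨V, hVo, hVs, hVc, hVe⟩ := h.elim (ι := Option ι)
    (fun o => Option.elim o Cᶜ G)
    (by rintro (_ | i); exacts [hC.isOpen_compl, hGo i])
    (by
      intro x hx
      by_cases hxC : x ∈ C
      · rcases Set.mem_iUnion.1 (hGc ⟨hx, hxC⟩) with ⟨i, hi⟩
        exact Set.mem_iUnion.2 ⟨some i, hi⟩
      · exact Set.mem_iUnion.2 ⟨none, hxC⟩)
  refine ⟨fun i => V (some i), fun i => hVo _, fun i => hVs _, ?_, ?_⟩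
  · rintro x ⟨hxS, hxC⟩
    rcases Set.mem_iUnion.1 (hVc hxS) with ⟨o, ho⟩
    cases o with
    | none => exact absurd (hVs none ho) (by simpa using hxC)
    | some i => exact Set.mem_iUnion.2 ⟨i, ho⟩
  · rintro x ⟨hxS, hxC⟩
    refine le_trans ?_ (hVe x hxS)
    exact encard_index_le (fun i hi => some i) (fun i hi => hi)
      (fun i j _ _ hij => Option.some_injective _ hij)

/-- Transfer `RelDim` into a subtype. -/
lemma RelDim.restrict {S T : Set Z} (hTS : T ⊆ S) (h : RelDim T n) :
    RelDim (Subtype.val ⁻¹' T : Set ↥S) n := by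
  classical
  intro ι G' hG'o hG'c
  have : ∀ i, ∃ G : Set Z, IsOpen G ∧ Subtype.val ⁻¹' G = G' i := fun i =>
    isOpen_induced_iff.1 (hG'o i)
  choose G hGo hGeq using this
  obtain ⟨V, hVo, hVs, hVc, hVe⟩ := h.elim G hGo
    (by
      intro x hx
      rcases Set.mem_iUnion.1 (hG'c (show (⟨x, hTS hx⟩ : ↥S) ∈ Subtype.val ⁻¹' T from hx))
        with ⟨i, hi⟩
      rw [← hGeq i] at hi
      exact Set.mem_iUnion.2 ⟨i, hi⟩)
  refine ⟨fun i => Subtype.val ⁻¹' (V i), fun i => (hVo i).preimage continuous_subtype_val,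
    ?_, ?_, ?_⟩
  · intro i
    rw [← hGeq i]
    exact Set.preimage_mono (hVs i)
  · intro x hx
    rcases Set.mem_iUnion.1 (hVc hx) with ⟨i, hi⟩
    exact Set.mem_iUnion.2 ⟨i, hi⟩
  · intro x hx
    exact hVe x hx

/-- Transfer `RelDim` out of a subtype. -/
lemma RelDim.of_restrict {S T : Set Z} (hTS : T ⊆ S)
    (h : RelDim (Subtype.val ⁻¹' T : Set ↥S) n) : RelDim T n := by
  classical
  intro ι G hGo hGc
  obtain ⟨V', hV'o, hV's, hV'c, hV'e⟩ := h.elim (fun i => (Subtype.val ⁻¹' (G i) : Set ↥S))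
    (fun i => (hGo i).preimage continuous_subtype_val)
    (by
      intro x hx
      rcases Set.mem_iUnion.1 (hGc (show (x : Z) ∈ T from hx)) with ⟨i, hi⟩
      exact Set.mem_iUnion.2 ⟨i, hi⟩)
  have : ∀ i, ∃ W : Set Z, IsOpen W ∧ Subtype.val ⁻¹' W = V' i := fun i =>
    isOpen_induced_iff.1 (hV'o i)
  choose W hWo hWeq using this
  refine ⟨fun i => W i ∩ G i, fun i => (hWo i).inter (hGo i), fun i => Set.inter_subset_right,
    ?_, ?_⟩
  · intro x hx
    rcases Set.mem_iUnion.1 (hV'c (show (⟨x, hTS hx⟩ : ↥S) ∈ _ from hx)) with ⟨i, hi⟩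
    have hxW : x ∈ W i := by rw [← hWeq i] at hi; exact hi
    have hxG : x ∈ G i := hV's i hi
    exact Set.mem_iUnion.2 ⟨i, hxW, hxG⟩
  · intro x hx
    refine le_trans ?_ (hV'e ⟨x, hTS hx⟩ hx)
    refine encard_index_le (fun i hi => i) ?_ (fun i j _ _ hij => hij)
    intro i hi
    show (⟨x, hTS hx⟩ : ↥S) ∈ V' i
    rw [← hWeq i]
    exact hi.1



/-- Rudin's construction: every open cover of a pseudo-e-metric space has a precise open
refinement which is σ-discrete (here: for each `m`, the pieces are pairwise disjoint)
and (globally) locally finite. -/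
lemma sigma_disc {α : Type u} [PseudoEMetricSpace α] {ι : Type w} (s : ι → Set α)
    (ho : ∀ i, IsOpen (s i)) (hcov' : ⋃ i, s i = univ) :
    ∃ D : ℕ → ι → Set α, (∀ m i, IsOpen (D m i)) ∧ (∀ m i, D m i ⊆ s i) ∧
      (∀ x : α, ∃ m i, x ∈ D m i) ∧
      LocallyFinite (fun mi : ℕ × ι => D mi.1 mi.2) ∧
      (∀ m, Pairwise fun i j => Disjoint (D m i) (D m j)) := by
  classical
  have pow_pos : ∀ k : ℕ, (0 : ℝ≥0∞) < 2⁻¹ ^ k := fun k =>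
    ENNReal.pow_pos (ENNReal.inv_pos.2 ENNReal.ofNat_ne_top) _
  have hpow_le : ∀ {m n : ℕ}, m ≤ n → (2⁻¹ : ℝ≥0∞) ^ n ≤ 2⁻¹ ^ m := @fun m n h =>
    pow_le_pow_right_of_le_one' (ENNReal.inv_le_one.2 ENNReal.one_lt_two.le) h
  have h2pow : ∀ n : ℕ, 2 * (2⁻¹ : ℝ≥0∞) ^ (n + 1) = 2⁻¹ ^ n := fun n => by
    simp [pow_succ', ← mul_assoc, ENNReal.mul_inv_cancel two_ne_zero ENNReal.ofNat_ne_top]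
  have hcov : ∀ x : α, ∃ i, x ∈ s i := by
    intro x
    have : x ∈ ⋃ i, s i := hcov' ▸ mem_univ x
    exact mem_iUnion.1 this
  obtain ⟨_, wf⟩ := exists_wellOrder ι
  set ind : α → ι := fun x => wellFounded_lt.min { i : ι | x ∈ s i } (hcov x)
  have mem_ind : ∀ x, x ∈ s (ind x) := fun x => wellFounded_lt.min_mem _ (hcov x)
  have nmem_of_lt_ind : ∀ {x i}, i < ind x → x ∉ s i := @fun x i hlt hxi =>
    wellFounded_lt.not_lt_min { i : ι | x ∈ s i } hxi hlt
  set D : ℕ → ι → Set α := fun n =>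
    Nat.strongRec (fun n D' i =>
      ⋃ (x : α) (_ : ind x = i) (_ : EMetric.ball x (3 * 2⁻¹ ^ n) ⊆ s i) (_ :
        ∀ (m : ℕ) (H : m < n), ∀ (j : ι), x ∉ D' m H j), EMetric.ball x (2⁻¹ ^ n)) n with hD
  have Dn : ∀ n i, D n i = ⋃ (x : α) (_ : ind x = i)
      (_ : EMetric.ball x (3 * 2⁻¹ ^ n) ⊆ s i)
      (_ : ∀ m < n, ∀ (j : ι), x ∉ D m j), EMetric.ball x (2⁻¹ ^ n) := fun n s => by
    simp only [hD]
    rw [Nat.strongRecOn'_beta]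
  have memD : ∀ {n i y},
      y ∈ D n i ↔ ∃ x : α, ind x = i ∧ EMetric.ball x (3 * 2⁻¹ ^ n) ⊆ s i ∧
        (∀ m < n, ∀ (j : ι), x ∉ D m j) ∧ edist y x < 2⁻¹ ^ n := by
    intro n i y
    rw [Dn n i]
    simp only [mem_iUnion, Metric.mem_eball, exists_prop]
    exact Iff.rfl
  have Dcov : ∀ x, ∃ n i, x ∈ D n i := fun x => by
    obtain ⟨n, hn⟩ : ∃ n : ℕ, EMetric.ball x (3 * 2⁻¹ ^ n) ⊆ s (ind x) := by
      rcases EMetric.isOpen_iff.1 (ho <| ind x) x (mem_ind x) with ⟨ε, ε0, hε⟩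
      have : 0 < ε / 3 := ENNReal.div_pos_iff.2 ⟨ε0.lt.ne', ENNReal.coe_ne_top⟩
      rcases ENNReal.exists_inv_two_pow_lt this.ne' with ⟨n, hn⟩
      refine ⟨n, Subset.trans (EMetric.ball_subset_ball ?_) hε⟩
      simpa only [div_eq_mul_inv, mul_comm] using (ENNReal.mul_lt_of_lt_div hn).le
    by_contra! h
    apply h n (ind x)
    exact memD.2 ⟨x, rfl, hn, fun _ _ _ => h _ _, Metric.mem_eball_self (pow_pos _)⟩
  have Dopen : ∀ n i, IsOpen (D n i) := fun n i => by
    rw [Dn]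
    iterate 4 refine isOpen_iUnion fun _ => ?_
    exact EMetric.isOpen_ball
  have HDS : ∀ n i, D n i ⊆ s i := fun n i x => by
    rw [memD]
    rintro ⟨y, rfl, hsub, -, hyx⟩
    refine hsub (hyx.trans_le <| le_mul_of_one_le_left' ?_)
    norm_num1
  -- pairwise disjointness within a level
  have Ddisj : ∀ m, Pairwise fun i j => Disjoint (D m i) (D m j) := by
    intro m
    have key : ∀ i j : ι, i < j → ∀ y, y ∈ D m i → y ∈ D m j → False := by
      intro i j hij y hyi hyj
      rcases memD.1 hyi with ⟨a, hai, hbal, -, hda⟩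
      rcases memD.1 hyj with ⟨b, hbj, -, -, hdb⟩
      have hbi : b ∉ s i := by
        refine nmem_of_lt_ind ?_
        rw [hbj]; exact hij
      apply hbi
      refine hbal ?_
      show edist b a < 3 * 2⁻¹ ^ m
      calc edist b a ≤ edist b y + edist y a := edist_triangle _ _ _
        _ < 2⁻¹ ^ m + 2⁻¹ ^ m := by
            refine ENNReal.add_lt_add ?_ hda
            rwa [edist_comm]
        _ = 2 * 2⁻¹ ^ m := by rw [two_mul]
        _ < 3 * 2⁻¹ ^ m := by
            rw [← two_add_one_eq_three, add_mul, one_mul]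
            exact ENNReal.lt_add_right
              (ENNReal.mul_ne_top ENNReal.ofNat_ne_top
                (pow_ne_top (ENNReal.inv_ne_top.2 two_ne_zero))) (pow_pos m).ne'
    intro i j hij
    rw [Set.disjoint_left]
    intro y hyi hyj
    rcases hij.lt_or_gt with h | h
    · exact key i j h y hyi hyj
    · exact key j i h y hyj hyi
  refine ⟨D, Dopen, HDS, Dcov, ?_, Ddisj⟩
  -- local finiteness, as in mathlib
  · intro x
    rcases Dcov x with ⟨n, i, hn⟩
    have : D n i ∈ 𝓝 x := IsOpen.mem_nhds (Dopen _ _) hn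
    rcases (nhds_basis_uniformity uniformity_basis_edist_inv_two_pow).mem_iff.1 this with
      ⟨k, -, hsub : EMetric.ball x (2⁻¹ ^ k) ⊆ D n i⟩
    set B := EMetric.ball x (2⁻¹ ^ (n + k + 1))
    refine ⟨B, Metric.eball_mem_nhds _ (pow_pos _), ?_⟩
    have Hgt : ∀ m ≥ n + k + 1, ∀ (i : ι), Disjoint (D m i) B := fun m hm i => by
      rw [disjoint_iff_inf_le]
      rintro y ⟨hym, hyx⟩
      rcases memD.1 hym with ⟨z, rfl, _hzi, H, hz⟩
      have : z ∉ EMetric.ball x (2⁻¹ ^ k) := fun hz' => H n (by omega) i (hsub hz')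
      apply this
      calc
        edist z x ≤ edist y z + edist y x := edist_triangle_left _ _ _
        _ < 2⁻¹ ^ m + 2⁻¹ ^ (n + k + 1) := ENNReal.add_lt_add hz hyx
        _ ≤ 2⁻¹ ^ (k + 1) + 2⁻¹ ^ (k + 1) :=
          (add_le_add (hpow_le <| by omega) (hpow_le <| by omega))
        _ = 2⁻¹ ^ k := by rw [← two_mul, h2pow]
    have Hle : ∀ m ≤ n + k, Set.Subsingleton { j | (D m j ∩ B).Nonempty } := by
      rintro m hm j₁ ⟨y, hyD, hyB⟩ j₂ ⟨z, hzD, hzB⟩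
      by_contra! h' : j₁ ≠ j₂
      wlog h : j₁ < j₂ generalizing j₁ j₂ y z
      · exact this z hzD hzB y hyD hyB h'.symm (h'.lt_or_gt.resolve_left h)
      rcases memD.1 hyD with ⟨y', rfl, hsuby, -, hdisty⟩
      rcases memD.1 hzD with ⟨z', rfl, -, -, hdistz⟩
      suffices edist z' y' < 3 * 2⁻¹ ^ m from nmem_of_lt_ind h (hsuby this)
      calc
        edist z' y' ≤ edist z' x + edist x y' := edist_triangle _ _ _
        _ ≤ edist z z' + edist z x + (edist y x + edist y y') :=
          (add_le_add (edist_triangle_left _ _ _) (edist_triangle_left _ _ _))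
        _ < 2⁻¹ ^ m + 2⁻¹ ^ (n + k + 1) + (2⁻¹ ^ (n + k + 1) + 2⁻¹ ^ m) := by
          apply_rules [ENNReal.add_lt_add]
        _ = 2 * (2⁻¹ ^ m + 2⁻¹ ^ (n + k + 1)) := by simp only [two_mul, add_comm]
        _ ≤ 2 * (2⁻¹ ^ m + 2⁻¹ ^ (m + 1)) := by
          gcongr 2 * (_ + ?_); exact hpow_le (add_le_add hm le_rfl)
        _ = 3 * 2⁻¹ ^ m := by
          rw [mul_add, h2pow, ← two_add_one_eq_three, add_mul, one_mul]
    have : (⋃ (m ≤ n + k) (i ∈ { i : ι | (D m i ∩ B).Nonempty }), {(m, i)}).Finite :=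
      (finite_le_nat _).biUnion' fun i hi =>
        (Hle i hi).finite.biUnion' fun _ _ => finite_singleton _
    refine this.subset fun I hI => ?_
    simp only [mem_iUnion]
    refine ⟨I.1, ?_, I.2, hI, rfl⟩
    exact not_lt.1 fun hlt => (Hgt I.1 hlt I.2).le_bot hI.choose_spec


section D2
variable {Z : Type u} [TopologicalSpace Z] {n : ℕ}


/-- Improve the multiplicity of an open cover of the whole space at the points
of a closed subset `F` with `RelDim F n`. -/
lemma shrink_on_closed {F : Set Z} (hFc : IsClosed F) (hF : RelDim F n)
    {ι : Type w} (w : ι → Set Z) (hwo : ∀ i, IsOpen (w i)) (hwc : ⋃ i, w i = univ) :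
    ∃ w' : ι → Set Z, (∀ i, IsOpen (w' i)) ∧ (∀ i, w' i ⊆ w i) ∧ (⋃ i, w' i = univ) ∧
      ∀ x ∈ F, {i | x ∈ w' i}.encard ≤ n + 1 := by
  obtain ⟨G, hGo, hGs, hGc, hGe⟩ := hF.elim w hwo (hwc ▸ subset_univ F)
  refine ⟨fun i => G i ∪ (w i ∩ Fᶜ), fun i => (hGo i).union ((hwo i).inter hFc.isOpen_compl),
    fun i => union_subset (hGs i) inter_subset_left, ?_, ?_⟩
  · apply eq_univ_of_forall
    intro x
    by_cases hxF : x ∈ F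
    · rcases mem_iUnion.1 (hGc hxF) with ⟨i, hi⟩
      exact mem_iUnion.2 ⟨i, Or.inl hi⟩
    · have : x ∈ ⋃ i, w i := hwc ▸ mem_univ x
      rcases mem_iUnion.1 this with ⟨i, hi⟩
      exact mem_iUnion.2 ⟨i, Or.inr ⟨hi, hxF⟩⟩
  · intro x hxF
    refine le_trans (Set.encard_le_encard ?_) (hGe x hxF)
    intro i hi
    rcases hi with hi | hi
    · exact hi
    · exact absurd hxF hi.2

/-- Iterated shrinking: produce a closed precise shrinking of a locally finite open
cover, with multiplicity `≤ n+1`, given a countable closed decomposition with `RelDim ≤ n`. -/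
lemma closed_shrink [NormalSpace Z] {ι : Type w}
    (U : ι → Set Z) (hUo : ∀ i, IsOpen (U i)) (hUc : ⋃ i, U i = univ)
    (hUpf : ∀ x : Z, {i | x ∈ U i}.Finite)
    (F : ℕ → Set Z) (hFc : ∀ k, IsClosed (F k)) (hFU : ⋃ k, F k = univ)
    (hF : ∀ k, RelDim (F k) n) :
    ∃ C : ι → Set Z, (∀ i, IsClosed (C i)) ∧ (∀ i, C i ⊆ U i) ∧ (⋃ i, C i = univ) ∧
      ∀ x, {i | x ∈ C i}.encard ≤ n + 1 := by
  classical
  set Good : (ι → Set Z) → Prop := fun v =>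
    (∀ i, IsOpen (v i)) ∧ (⋃ i, v i = univ) ∧ (∀ i, v i ⊆ U i) with hGood
  have stepEx : ∀ (k : ℕ) (v : ι → Set Z), ∃ v' : ι → Set Z, Good v →
      (Good v' ∧ (∀ i, closure (v' i) ⊆ v i) ∧ ∀ x ∈ F k, {i | x ∈ v' i}.encard ≤ n + 1) := by
    intro k v
    by_cases hv : Good v
    · obtain ⟨w, hwc, hwo, hwcl⟩ := exists_subset_iUnion_closure_subset isClosed_univ hv.1
        (fun x _ => (hUpf x).subset fun i hi => hv.2.2 i hi) (fun x _ => by rw [hv.2.1]; exact mem_univ x)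
      obtain ⟨w', hw'o, hw's, hw'c, hw'e⟩ := shrink_on_closed (hFc k) (hF k) w hwo
        (eq_univ_of_univ_subset hwc)
      refine ⟨w', fun _ => ⟨⟨hw'o, hw'c, fun i => ?_⟩, fun i => ?_, hw'e⟩⟩
      · exact ((hw's i).trans subset_closure).trans ((hwcl i).trans (hv.2.2 i))
      · exact (closure_mono (hw's i)).trans (hwcl i)
    · exact ⟨v, fun h => absurd h hv⟩
  set seq : ℕ → ι → Set Z := fun k => Nat.rec U (fun k v => (stepEx k v).choose) k with hseq
  have seq_succ : ∀ k, seq (k + 1) = (stepEx k (seq k)).choose := fun k => rfl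
  have hGoodU : Good U := ⟨hUo, hUc, fun i => le_refl _⟩
  have hGoodSeq : ∀ k, Good (seq k) := by
    intro k
    induction k with
    | zero => exact hGoodU
    | succ k ih =>
      rw [seq_succ]
      exact ((stepEx k (seq k)).choose_spec ih).1
  have hstep : ∀ k, (∀ i, closure (seq (k+1) i) ⊆ seq k i) ∧
      ∀ x ∈ F k, {i | x ∈ seq (k+1) i}.encard ≤ n + 1 := by
    intro k
    rw [seq_succ]
    exact ⟨((stepEx k (seq k)).choose_spec (hGoodSeq k)).2.1,
      ((stepEx k (seq k)).choose_spec (hGoodSeq k)).2.2⟩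
  have hmono : ∀ k, ∀ i, seq (k+1) i ⊆ seq k i := fun k i =>
    subset_closure.trans ((hstep k).1 i)
  have hmono' : ∀ {k k'}, k ≤ k' → ∀ i, seq k' i ⊆ seq k i := by
    intro k k' h i
    induction h with
    | refl => exact le_refl _
    | @step k'' h ih => exact (hmono k'' i).trans ih
  refine ⟨fun i => ⋂ k, closure (seq (k+1) i), fun i => isClosed_iInter fun _ => isClosed_closure,
    fun i => ?_, ?_, ?_⟩
  · exact (iInter_subset _ 0).trans (((hstep 0).1 i).trans (le_refl _))
  · apply eq_univ_of_forall
    intro x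
    have hsi : ∀ k, ∃ i, x ∈ seq k i := by
      intro k
      have := (hGoodSeq k).2.1 ▸ mem_univ x
      exact mem_iUnion.1 this
    choose g hg using hsi
    have hgU : ∀ k, g k ∈ {i | x ∈ U i} := fun k => (hGoodSeq k).2.2 (g k) (hg k)
    haveI : Finite ({i | x ∈ U i} : Set ι) := (hUpf x).to_subtype
    obtain ⟨⟨i, hiU⟩, hfib⟩ := Finite.exists_infinite_fiber
      (fun k : ℕ => (⟨g k, hgU k⟩ : {i | x ∈ U i}))
    have hinf : {k : ℕ | g k = i}.Infinite := by
      have : ((fun k : ℕ => (⟨g k, hgU k⟩ : {i | x ∈ U i})) ⁻¹' {⟨i, hiU⟩}).Infinite :=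
        Set.infinite_coe_iff.1 hfib
      refine this.mono ?_
      intro k hk
      simpa using congrArg Subtype.val hk
    refine mem_iUnion.2 ⟨i, mem_iInter.2 fun k => ?_⟩
    obtain ⟨k', hk', hk'k⟩ := hinf.exists_gt (k + 1)
    have : x ∈ seq k' i := hk' ▸ hg k'
    exact subset_closure (hmono' (le_of_lt hk'k) i this)
  · intro x
    have : x ∈ ⋃ k, F k := hFU ▸ mem_univ x
    rcases mem_iUnion.1 this with ⟨j, hj⟩
    refine le_trans (Set.encard_le_encard ?_) ((hstep j).2 x hj)
    intro i hi
    have : x ∈ closure (seq (j+1+1) i) := mem_iInter.1 hi (j+1)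
    exact (hstep (j+1)).1 i this


end D2


lemma enat_le_of_not_le {a : ℕ∞} {n : ℕ} (h : ¬ ((n : ℕ∞) + 1 ≤ a)) : a ≤ n := by
  cases a with
  | top => exact absurd le_top h
  | coe a =>
    have h1 : ¬ ((n : ℕ) + 1 ≤ a) := fun hc => h (by exact_mod_cast hc)
    exact_mod_cast (by omega : a ≤ n)

lemma enat_absurd {n : ℕ} {a : ℕ∞} (h1 : (n : ℕ∞) + 1 + 1 ≤ a) (h2 : a ≤ (n : ℕ∞) + 1) : False := by
  have := h1.trans h2
  rcases (le_top (a := ((n : ℕ∞)))).lt_or_eq with h | h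
  · have h3 : ((n + 2 : ℕ) : ℕ∞) ≤ ((n + 1 : ℕ) : ℕ∞) := by push_cast; exact this
    exact absurd (Nat.cast_le.1 h3) (by omega)
  · exact absurd h (by simp)

variable {Z : Type u} [TopologicalSpace Z] [NormalSpace Z] {n : ℕ} {ι : Type w}

/-- Swelling: expand a closed, σ-disjointly-indexed, locally finite family of multiplicity
`≤ n+1` to an open family with the same bounds. -/
lemma swell (D : ℕ → ι → Set Z) (hDo : ∀ m i, IsOpen (D m i))
    (hDlf : LocallyFinite (fun mi : ℕ × ι => D mi.1 mi.2))
    (hDdisj : ∀ m, Pairwise fun i j => Disjoint (D m i) (D m j))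
    (C : ℕ → ι → Set Z) (hCc : ∀ m i, IsClosed (C m i)) (hCD : ∀ m i, C m i ⊆ D m i)
    (hCe : ∀ x, {mi : ℕ × ι | x ∈ C mi.1 mi.2}.encard ≤ n + 1) :
    ∃ W : ℕ → ι → Set Z, (∀ m i, IsOpen (W m i)) ∧ (∀ m i, C m i ⊆ W m i) ∧
      (∀ m i, W m i ⊆ D m i) ∧ ∀ x, {mi : ℕ × ι | x ∈ W mi.1 mi.2}.encard ≤ n + 1 := by
  classical
  set Inv : ℕ → (ℕ → ι → Set Z) → Prop := fun t K =>
    (∀ m i, IsClosed (K m i)) ∧ (∀ m i, K m i ⊆ D m i) ∧ (∀ m i, t ≤ m → K m i = C m i) ∧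
    (∀ m i, C m i ⊆ K m i) ∧ (∀ x, {mi : ℕ × ι | x ∈ K mi.1 mi.2}.encard ≤ n + 1) with hInv
  -- the "bad set" is closed
  have badClosed : ∀ (K : ℕ → ι → Set Z), (∀ m i, IsClosed (K m i)) →
      (∀ m i, K m i ⊆ D m i) → ∀ (t : ℕ) (i : ι),
      IsClosed {x : Z | (n : ℕ∞) + 1 ≤
        {mj : ℕ × ι | mj ≠ (t, i) ∧ x ∈ K mj.1 mj.2}.encard} := by
    intro K hKc hKD t i
    rw [← isOpen_compl_iff]
    rw [isOpen_iff_mem_nhds]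
    intro x hx
    simp only [mem_compl_iff, mem_setOf_eq, not_le] at hx
    have hKlf : LocallyFinite (fun mj : ℕ × ι => K mj.1 mj.2) :=
      hDlf.subset fun mj => hKD mj.1 mj.2
    obtain ⟨N₀, hN₀, hfin⟩ := hKlf x
    set S : Set (ℕ × ι) := {mj | (K mj.1 mj.2 ∩ N₀).Nonempty ∧ x ∉ K mj.1 mj.2} with hS
    have hSfin : S.Finite := hfin.subset fun mj hmj => hmj.1
    have hMopen : IsOpen (⋂ mj ∈ S, (K mj.1 mj.2)ᶜ) :=
      hSfin.isOpen_biInter fun mj _ => (hKc mj.1 mj.2).isOpen_compl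
    have hxM : x ∈ ⋂ mj ∈ S, (K mj.1 mj.2)ᶜ :=
      mem_iInter₂.2 fun mj hmj => hmj.2
    refine Filter.mem_of_superset (Filter.inter_mem hN₀ (hMopen.mem_nhds hxM)) ?_
    rintro y ⟨hyN₀, hyM⟩
    simp only [mem_compl_iff, mem_setOf_eq, not_le]
    refine lt_of_le_of_lt (Set.encard_le_encard ?_) hx
    rintro mj ⟨hmjne, hymj⟩
    refine ⟨hmjne, ?_⟩
    by_contra hxK
    have hmjS : mj ∈ S := ⟨⟨y, hymj, hyN₀⟩, hxK⟩
    exact (mem_iInter₂.1 hyM mj hmjS) hymj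
  -- one step of the recursion
  have stepEx : ∀ (t : ℕ) (K : ℕ → ι → Set Z), ∃ WK : (ι → Set Z) × (ℕ → ι → Set Z),
      Inv t K → ((∀ i, IsOpen (WK.1 i)) ∧ (∀ i, C t i ⊆ WK.1 i) ∧
        (∀ i, closure (WK.1 i) ⊆ D t i) ∧
        (WK.2 = fun m i => if m = t then closure (WK.1 i) else K m i) ∧ Inv (t+1) WK.2) := by
    intro t K
    by_cases h : Inv t K
    · obtain ⟨hKc, hKD, hKC, hCK, hKe⟩ := h
      set B : ι → Set Z := fun i => {x : Z | (n : ℕ∞) + 1 ≤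
        {mj : ℕ × ι | mj ≠ (t, i) ∧ x ∈ K mj.1 mj.2}.encard} with hB
      have hBC : ∀ i, C t i ⊆ (D t i) ∩ (B i)ᶜ := by
        intro i x hx
        refine ⟨hCD t i hx, ?_⟩
        intro hxB
        simp only [hB, mem_setOf_eq] at hxB
        have hxK : x ∈ K t i := by rw [hKC t i le_rfl]; exact hx
        have hins : insert ((t, i) : ℕ × ι) {mj : ℕ × ι | mj ≠ (t, i) ∧ x ∈ K mj.1 mj.2} ⊆
            {mi : ℕ × ι | x ∈ K mi.1 mi.2} := by
          rintro mj (rfl | ⟨-, hmj⟩)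
          exacts [hxK, hmj]
        have hcard : {mj : ℕ × ι | mj ≠ (t, i) ∧ x ∈ K mj.1 mj.2}.encard + 1 ≤ (n : ℕ∞) + 1 :=
          le_trans (le_of_eq (Set.encard_insert_of_notMem (by simp)).symm)
            (le_trans (Set.encard_le_encard hins) (hKe x))
        exact enat_absurd (by exact add_le_add hxB le_rfl) hcard
      have hW : ∀ i, ∃ W : Set Z, IsOpen W ∧ C t i ⊆ W ∧
          closure W ⊆ (D t i) ∩ (B i)ᶜ := fun i =>
        normal_exists_closure_subset (hCc t i) ((hDo t i).inter (badClosed K hKc hKD t i).isOpen_compl)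
          (hBC i)
      choose W hWo hWC hWcl using hW
      refine ⟨(W, fun m i => if m = t then closure (W i) else K m i), fun _ => ?_⟩
      refine ⟨hWo, hWC, fun i => (hWcl i).trans inter_subset_left, rfl, ?_, ?_, ?_, ?_, ?_⟩
      · intro m i
        by_cases hm : m = t
        · simp only [hm, if_pos rfl]; exact isClosed_closure
        · simp only [if_neg hm]; exact hKc m i
      · intro m i
        by_cases hm : m = t
        · subst hm; simp only [if_pos rfl]; exact (hWcl i).trans inter_subset_left
        · simp only [if_neg hm]; exact hKD m i
      · intro m i hm
        have hm' : m ≠ t := by omega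
        simp only [if_neg hm']
        exact hKC m i (by omega)
      · intro m i
        by_cases hm : m = t
        · subst hm; simp only [if_pos rfl]; exact (hWC i).trans subset_closure
        · simp only [if_neg hm]; exact hCK m i
      · intro x
        by_cases hex : ∃ i₀, x ∈ closure (W i₀)
        · obtain ⟨i₀, hi₀⟩ := hex
          have hxB : x ∉ B i₀ := ((hWcl i₀) hi₀).2
          have hsub : {mi : ℕ × ι | x ∈ (if mi.1 = t then closure (W mi.2) else K mi.1 mi.2)} ⊆
              insert ((t, i₀) : ℕ × ι) {mj : ℕ × ι | mj ≠ (t, i₀) ∧ x ∈ K mj.1 mj.2} := by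
            rintro ⟨m, i⟩ hmi
            simp only [mem_setOf_eq] at hmi
            by_cases hm : m = t
            · subst hm
              rw [if_pos rfl] at hmi
              have : i = i₀ := by
                by_contra hne
                exact Set.disjoint_left.1 (hDdisj m hne)
                  ((hWcl i).trans inter_subset_left hmi)
                  (((hWcl i₀).trans inter_subset_left) hi₀)
              exact Or.inl (by rw [this])
            · rw [if_neg hm] at hmi
              exact Or.inr ⟨by simp [Prod.ext_iff, hm], hmi⟩
          refine le_trans (Set.encard_le_encard hsub) ?_
          refine le_trans (Set.encard_insert_le _ _) ?_
          have : {mj : ℕ × ι | mj ≠ (t, i₀) ∧ x ∈ K mj.1 mj.2}.encard ≤ (n : ℕ∞) := by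
            simp only [hB, mem_setOf_eq] at hxB
            exact enat_le_of_not_le (by exact_mod_cast hxB)
          exact add_le_add this le_rfl
        · push_neg at hex
          refine le_trans (Set.encard_le_encard ?_) (hKe x)
          rintro ⟨m, i⟩ hmi
          simp only [mem_setOf_eq] at hmi ⊢
          by_cases hm : m = t
          · subst hm; rw [if_pos rfl] at hmi; exact absurd hmi (hex i)
          · rwa [if_neg hm] at hmi
    · exact ⟨((fun _ => ∅), K), fun h' => absurd h' h⟩
  -- run the recursion
  set Kseq : ℕ → ℕ → ι → Set Z := fun t => Nat.rec C (fun t K => (stepEx t K).choose.2) t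
    with hKseq
  have Kseq_succ : ∀ t, Kseq (t+1) = (stepEx t (Kseq t)).choose.2 := fun t => rfl
  set Wb : ℕ → ι → Set Z := fun t => (stepEx t (Kseq t)).choose.1 with hWb
  have hInv0 : Inv 0 C := ⟨hCc, hCD, fun _ _ _ => rfl, fun _ _ => le_refl _, hCe⟩
  have hInvSeq : ∀ t, Inv t (Kseq t) := by
    intro t
    induction t with
    | zero => exact hInv0
    | succ t ih =>
      rw [Kseq_succ]
      exact (((stepEx t (Kseq t)).choose_spec) ih).2.2.2.2
  have hWspec : ∀ t, (∀ i, IsOpen (Wb t i)) ∧ (∀ i, C t i ⊆ Wb t i) ∧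
      (∀ i, closure (Wb t i) ⊆ D t i) ∧
      (Kseq (t+1) = fun m i => if m = t then closure (Wb t i) else Kseq t m i) := by
    intro t
    obtain ⟨h1, h2, h3, h4, -⟩ := ((stepEx t (Kseq t)).choose_spec) (hInvSeq t)
    exact ⟨h1, h2, h3, by rw [Kseq_succ]; exact h4⟩
  have hstab : ∀ t m i, m < t → Kseq t m i = closure (Wb m i) := by
    intro t
    induction t with
    | zero => intro m i hm; omega
    | succ t ih =>
      intro m i hm
      rw [(hWspec t).2.2.2]
      by_cases hmt : m = t
      · subst hmt; simp
      · simp only [if_neg hmt]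
        exact ih m i (by omega)
  refine ⟨Wb, fun m i => (hWspec m).1 i, fun m i => (hWspec m).2.1 i,
    fun m i => subset_closure.trans ((hWspec m).2.2.1 i), ?_⟩
  intro x
  by_contra hbad
  have hge : (n : ℕ∞) + 1 + 1 ≤ {mi : ℕ × ι | x ∈ Wb mi.1 mi.2}.encard := by
    have := not_le.1 hbad
    exact Order.add_one_le_of_lt this
  obtain ⟨s, hs, hscard⟩ := Set.exists_subset_encard_eq hge
  have hsfin : s.Finite := by
    have h2 : s.encard = ((n + 2 : ℕ) : ℕ∞) := by rw [hscard]; push_cast; ring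
    exact Set.finite_of_encard_eq_coe h2
  obtain ⟨b, hb⟩ := (hsfin.image Prod.fst).bddAbove
  have hsK : s ⊆ {mi : ℕ × ι | x ∈ Kseq (b+1) mi.1 mi.2} := by
    rintro ⟨m, i⟩ hmi
    have hmb : m < b + 1 := by
      have : m ∈ Prod.fst '' s := ⟨(m, i), hmi, rfl⟩
      exact Nat.lt_succ_of_le (hb this)
    simp only [mem_setOf_eq]
    rw [hstab (b+1) m i hmb]
    exact subset_closure (hs hmi)
  have h1 : ((n : ℕ∞) + 1 + 1) ≤ {mi : ℕ × ι | x ∈ Kseq (b+1) mi.1 mi.2}.encard := by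
    rw [← hscard]
    exact Set.encard_le_encard hsK
  exact enat_absurd h1 ((hInvSeq (b+1)).2.2.2.2 x)

section E
variable {Z : Type u} [MetricSpace Z] {n : ℕ}

/-- Countable closed sum theorem for metric spaces. -/
lemma cst_univ (F : ℕ → Set Z) (hFc : ∀ k, IsClosed (F k)) (hFU : ⋃ k, F k = univ)
    (hF : ∀ k, RelDim (F k) n) : RelDim (univ : Set Z) n := by
  classical
  intro ι U hUo hUc'
  have hUc : ⋃ i, U i = univ := eq_univ_of_univ_subset hUc'
  obtain ⟨D, hDo, hDs, hDcov, hDlf, hDdisj⟩ := sigma_disc U hUo hUc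
  obtain ⟨C, hCc, hCD, hCcov, hCe⟩ := closed_shrink (ι := ℕ × ι) (fun mi => D mi.1 mi.2)
    (fun mi => hDo mi.1 mi.2)
    (eq_univ_of_forall fun x => by
      rcases hDcov x with ⟨m, i, h⟩
      exact mem_iUnion.2 ⟨(m, i), h⟩)
    (fun x => hDlf.point_finite x)
    F hFc hFU hF
  obtain ⟨W, hWo, hWC, hWD, hWe⟩ := swell D hDo hDlf hDdisj (fun m i => C (m, i))
    (fun m i => hCc (m, i)) (fun m i => hCD (m, i))
    (fun x => le_trans (Set.encard_le_encard (fun mi hmi => hmi)) (hCe x))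
  refine ⟨fun i => ⋃ m, W m i, fun i => isOpen_iUnion fun m => hWo m i, ?_, ?_, ?_⟩
  · intro i
    exact iUnion_subset fun m => (hWD m i).trans (hDs m i)
  · intro x _
    have : x ∈ ⋃ mi : ℕ × ι, C mi := hCcov ▸ mem_univ x
    rcases mem_iUnion.1 this with ⟨⟨m, i⟩, hmi⟩
    exact mem_iUnion.2 ⟨i, mem_iUnion.2 ⟨m, hWC m i hmi⟩⟩
  · intro x _
    refine le_trans ?_ (hWe x)
    have hw : ∀ i, x ∈ ⋃ m, W m i → ∃ m, x ∈ W m i := fun i hi => mem_iUnion.1 hi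
    refine encard_index_le (fun i hi => (((hw i hi).choose : ℕ), i)) ?_ ?_
    · intro i hi
      exact (hw i hi).choose_spec
    · intro i j hi hj hij
      exact congrArg Prod.snd hij

/-- Relative countable closed sum theorem. -/
lemma cst_rel {S : Set Z} (F : ℕ → Set Z) (hFc : ∀ k, IsClosed (F k))
    (hcov : S ⊆ ⋃ k, F k) (hF : ∀ k, RelDim (S ∩ F k) n) : RelDim S n := by
  have key : RelDim (univ : Set ↥S) n := by
    refine cst_univ (fun k => (Subtype.val ⁻¹' (F k) : Set ↥S))
      (fun k => (hFc k).preimage continuous_subtype_val) ?_ ?_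
    · apply eq_univ_of_forall
      rintro ⟨x, hx⟩
      rcases mem_iUnion.1 (hcov hx) with ⟨k, hk⟩
      exact mem_iUnion.2 ⟨k, hk⟩
    · intro k
      have := (hF k).restrict (S := S) inter_subset_left
      have heq : (Subtype.val ⁻¹' (S ∩ F k) : Set ↥S) = Subtype.val ⁻¹' (F k) := by
        ext ⟨x, hx⟩
        simp [hx]
      rwa [heq] at this
  have h2 : RelDim (Subtype.val ⁻¹' S : Set ↥S) n := by
    have heq : (Subtype.val ⁻¹' S : Set ↥S) = univ := by
      apply eq_univ_of_forall; rintro ⟨x, hx⟩; exact hx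
    rwa [heq]
  exact RelDim.of_restrict (le_refl S) h2

/-- Open subsets of (pseudo e)metric spaces are `Fσ`. -/
lemma open_fsigma {G : Set Z} (hG : IsOpen G) :
    ∃ Cl : ℕ → Set Z, (∀ j, IsClosed (Cl j)) ∧ (∀ j, Cl j ⊆ G) ∧ ⋃ j, Cl j = G := by
  refine ⟨fun j => {x | ((j : ℝ≥0∞))⁻¹ ≤ EMetric.infEdist x Gᶜ}, fun j => ?_, fun j => ?_, ?_⟩
  · exact isClosed_le continuous_const EMetric.continuous_infEdist
  · intro x hx
    by_contra hxG
    have h0 : EMetric.infEdist x Gᶜ = 0 := EMetric.infEdist_zero_of_mem hxG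
    rw [mem_setOf_eq, h0, le_zero_iff] at hx
    exact (ENNReal.inv_ne_zero.2 (by simp)) hx
  · apply subset_antisymm
    · exact iUnion_subset fun j x hx => by
        by_contra hxG
        have h0 : EMetric.infEdist x Gᶜ = 0 := EMetric.infEdist_zero_of_mem hxG
        rw [mem_setOf_eq, h0, le_zero_iff] at hx
        exact (ENNReal.inv_ne_zero.2 (by simp)) hx
    · intro x hx
      rcases EMetric.isOpen_iff.1 hG x hx with ⟨ε, hε, hball⟩
      have hle : ε ≤ EMetric.infEdist x Gᶜ := by
        refine EMetric.le_infEdist.2 ?_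
        intro y hy
        by_contra hlt
        rw [edist_comm] at hlt
        exact hy (hball (not_le.1 hlt))
      rcases ENNReal.exists_inv_nat_lt hε.ne' with ⟨j, hj⟩
      exact mem_iUnion.2 ⟨j, le_trans (le_of_lt hj) hle⟩

/-- The subset theorem. -/
lemma RelDim.mono {S T : Set Z} (h : RelDim T n) (hST : S ⊆ T) : RelDim S n := by
  intro ι G hGo hGc
  set Gu : Set Z := ⋃ i, G i with hGu
  have hGuo : IsOpen Gu := isOpen_iUnion hGo
  obtain ⟨Cl, hClc, hClG, hClU⟩ := open_fsigma hGuo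
  have hGT : RelDim (Gu ∩ T) n := by
    refine cst_rel Cl hClc (fun x hx => hClU ▸ hx.1) ?_
    intro k
    have heq : (Gu ∩ T) ∩ Cl k = T ∩ Cl k := by
      apply subset_antisymm
      · rintro x ⟨⟨-, hxT⟩, hxC⟩; exact ⟨hxT, hxC⟩
      · rintro x ⟨hxT, hxC⟩; exact ⟨⟨hClG k hxC, hxT⟩, hxC⟩
    rw [heq]
    exact h.closed_inter (hClc k)
  obtain ⟨V, hVo, hVs, hVc, hVe⟩ := hGT ι G hGo inter_subset_left
  have hSsub : S ⊆ Gu ∩ T := fun x hx => ⟨hGc hx, hST hx⟩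
  exact ⟨V, hVo, hVs, fun x hx => hVc (hSsub hx), fun x hx => hVe x (hSsub hx)⟩

/-- Disjoint unions of open pieces. -/
lemma relDim_disjUnion {κ : Type w} (P : κ → Set Z) (hPo : ∀ b, IsOpen (P b))
    (hPd : Pairwise fun a b => Disjoint (P a) (P b))
    (hP : ∀ b, RelDim (P b) n) : RelDim (⋃ b, P b) n := by
  intro ι G hGo hGc
  have hex : ∀ b, ∃ V : ι → Set Z, (∀ i, IsOpen (V i)) ∧ (∀ i, V i ⊆ G i) ∧
      (P b ⊆ ⋃ i, V i) ∧ ∀ x ∈ P b, {i | x ∈ V i}.encard ≤ n + 1 := fun b =>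
    (hP b).elim G hGo ((subset_iUnion P b).trans hGc)
  choose V hVo hVs hVc hVe using hex
  refine ⟨fun i => ⋃ b, (V b i ∩ P b), fun i => isOpen_iUnion fun b => ?_, ?_, ?_, ?_⟩
  · exact (hVo b i).inter (hPo b)
  · intro i
    exact iUnion_subset fun b => inter_subset_left.trans (hVs b i)
  · intro x hx
    rcases mem_iUnion.1 hx with ⟨b, hb⟩
    rcases mem_iUnion.1 (hVc b hb) with ⟨i, hi⟩
    exact mem_iUnion.2 ⟨i, mem_iUnion.2 ⟨b, hi, hb⟩⟩
  · intro x hx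
    rcases mem_iUnion.1 hx with ⟨b, hb⟩
    refine le_trans (Set.encard_le_encard ?_) (hVe b x hb)
    intro i hi
    rcases mem_iUnion.1 hi with ⟨c, hci, hcP⟩
    have : c = b := by
      by_contra hne
      exact Set.disjoint_left.1 (hPd hne) hcP hb
    rwa [this] at hci

/-- Local-to-global over the whole space. -/
lemma loc_glob_univ {κ : Type w} (O : κ → Set Z) (hOo : ∀ b, IsOpen (O b))
    (hOc : ⋃ b, O b = univ) (hO : ∀ b, RelDim (O b) n) : RelDim (univ : Set Z) n := by
  obtain ⟨D, hDo, hDs, hDcov, hDlf, hDdisj⟩ := sigma_disc O hOo hOc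
  have hZm : ∀ m, RelDim (⋃ b, D m b) n := fun m =>
    relDim_disjUnion (D m) (hDo m) (hDdisj m) (fun b => (hO b).mono (hDs m b))
  have hfs : ∀ m, ∃ Cl : ℕ → Set Z, (∀ j, IsClosed (Cl j)) ∧ (∀ j, Cl j ⊆ ⋃ b, D m b) ∧
      ⋃ j, Cl j = ⋃ b, D m b := fun m => open_fsigma (isOpen_iUnion (hDo m))
  choose Cl hClc hClsub hClU using hfs
  refine cst_univ (fun k => Cl (Nat.pairEquiv.symm k).1 (Nat.pairEquiv.symm k).2)
    (fun k => hClc _ _) ?_ ?_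
  · apply eq_univ_of_forall
    intro x
    rcases hDcov x with ⟨m, b, hmb⟩
    have : x ∈ ⋃ j, Cl m j := by
      rw [hClU m]
      exact mem_iUnion.2 ⟨b, hmb⟩
    rcases mem_iUnion.1 this with ⟨j, hj⟩
    refine mem_iUnion.2 ⟨Nat.pairEquiv (m, j), ?_⟩
    rw [Equiv.symm_apply_apply]
    exact hj
  · intro k
    exact (hZm _).mono (hClsub _ _)

/-- Local-to-global for subsets. -/
lemma loc_glob_rel {S : Set Z} {κ : Type w} (O : κ → Set Z) (hOo : ∀ b, IsOpen (O b))
    (hOc : S ⊆ ⋃ b, O b) (hO : ∀ b, RelDim (S ∩ O b) n) : RelDim S n := by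
  have key : RelDim (univ : Set ↥S) n := by
    refine loc_glob_univ (fun b => (Subtype.val ⁻¹' (O b) : Set ↥S))
      (fun b => (hOo b).preimage continuous_subtype_val) ?_ ?_
    · apply eq_univ_of_forall
      rintro ⟨x, hx⟩
      rcases mem_iUnion.1 (hOc hx) with ⟨b, hb⟩
      exact mem_iUnion.2 ⟨b, hb⟩
    · intro b
      have := (hO b).restrict (S := S) inter_subset_left
      have heq : (Subtype.val ⁻¹' (S ∩ O b) : Set ↥S) = Subtype.val ⁻¹' (O b) := by
        ext ⟨x, hx⟩
        simp [hx]
      rwa [heq] at this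
  have h2 : RelDim (Subtype.val ⁻¹' S : Set ↥S) n := by
    have heq : (Subtype.val ⁻¹' S : Set ↥S) = univ := by
      apply eq_univ_of_forall; rintro ⟨x, hx⟩; exact hx
    rwa [heq]
  exact RelDim.of_restrict (le_refl S) h2

end E
end DimAux


namespace DimAux

section Main
variable {X : Type u} {Y : Type v} [MetricSpace X] [MetricSpace Y] {f : X → Y} {n : ℕ}

/-- Pairwise disjoint balls around the points of a finite set. -/
lemma disjoint_balls {s : Set X} (hs : s.Finite) :
    ∃ r : X → ℝ≥0∞, (∀ x, 0 < r x) ∧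
      ∀ x ∈ s, ∀ x' ∈ s, x ≠ x' →
        Disjoint (EMetric.ball x (r x)) (EMetric.ball x' (r x')) := by
  classical
  set r : X → ℝ≥0∞ := fun x => ((hs.toFinset.erase x).inf fun x' => edist x x') / 2 with hr
  have hrpos : ∀ x, 0 < r x := by
    intro x
    rw [hr]
    rw [ENNReal.div_pos_iff]
    refine ⟨?_, by simp⟩
    have : (0 : ℝ≥0∞) < (hs.toFinset.erase x).inf fun x' => edist x x' := by
      rw [Finset.lt_inf_iff (by simp : (0:ℝ≥0∞) < ⊤)]
      intro x' hx'
      have hne : x' ≠ x := (Finset.mem_erase.1 hx').1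
      rw [edist_comm]
      exact edist_pos.2 hne
    exact this.ne'
  have hrle : ∀ x ∈ s, ∀ x' ∈ s, x' ≠ x → r x ≤ edist x x' / 2 := by
    intro x hx x' hx' hne
    rw [hr]
    refine ENNReal.div_le_div_right ?_ 2
    exact Finset.inf_le (Finset.mem_erase.2 ⟨hne, hs.mem_toFinset.2 hx'⟩)
  refine ⟨r, hrpos, ?_⟩
  intro x hx x' hx' hne
  rw [Set.disjoint_left]
  intro z hz hz'
  change edist z x < r x at hz; change edist z x' < r x' at hz'
  have hd : edist x x' ≤ edist z x + edist z x' := by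
    calc edist x x' ≤ edist x z + edist z x' := edist_triangle _ _ _
      _ = edist z x + edist z x' := by rw [edist_comm x z]
  have : edist x x' < edist x x' := by
    calc edist x x' ≤ edist z x + edist z x' := hd
      _ < r x + r x' := ENNReal.add_lt_add hz hz'
      _ ≤ edist x x' / 2 + edist x x' / 2 := by
          refine add_le_add (hrle x hx x' hx' (Ne.symm hne)) ?_
          rw [edist_comm x x']
          exact hrle x' hx' x hx hne
      _ = edist x x' := ENNReal.add_halves _
  exact absurd this (lt_irrefl _)

/-- The key local structure of an open map with finite fibers. -/
lemma master (hopen : IsOpenMap f) (hfib : ∀ y : Y, (f ⁻¹' {y}).Finite)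
    (y : Y) (u : X → Set X) (hu1 : ∀ x ∈ f ⁻¹' {y}, x ∈ u x) (hu2 : ∀ x, IsOpen (u x)) :
    ∃ (B : X → Set X) (W : Set Y),
      (∀ x, IsOpen (B x)) ∧ (∀ x ∈ f ⁻¹' {y}, x ∈ B x) ∧ (∀ x, B x ⊆ u x) ∧
      (∀ x ∈ f ⁻¹' {y}, ∀ x' ∈ f ⁻¹' {y}, x ≠ x' → Disjoint (B x) (B x')) ∧
      IsOpen W ∧ y ∈ W ∧
      (∀ y' ∈ W, ∀ x ∈ f ⁻¹' {y}, ∃ z, z ∈ f ⁻¹' {y'} ∩ B x) ∧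
      (∀ y' ∈ W, (f ⁻¹' {y}).ncard ≤ (f ⁻¹' {y'}).ncard) ∧
      (∀ y' ∈ W, (f ⁻¹' {y'}).ncard ≤ (f ⁻¹' {y}).ncard →
        (∀ z ∈ f ⁻¹' {y'}, ∃ x ∈ f ⁻¹' {y}, z ∈ B x) ∧
        (∀ x ∈ f ⁻¹' {y}, ∀ z ∈ f ⁻¹' {y'} ∩ B x, ∀ z' ∈ f ⁻¹' {y'} ∩ B x, z = z')) := by
  classical
  obtain ⟨r, hrpos, hrdisj⟩ := disjoint_balls (hfib y)
  set B : X → Set X := fun x => EMetric.ball x (r x) ∩ u x with hB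
  have hBo : ∀ x, IsOpen (B x) := fun x => EMetric.isOpen_ball.inter (hu2 x)
  have hBx : ∀ x ∈ f ⁻¹' {y}, x ∈ B x := fun x hx =>
    ⟨EMetric.mem_ball_self (hrpos x), hu1 x hx⟩
  have hBdisj : ∀ x ∈ f ⁻¹' {y}, ∀ x' ∈ f ⁻¹' {y}, x ≠ x' → Disjoint (B x) (B x') :=
    fun x hx x' hx' hne =>
      ((hrdisj x hx x' hx' hne).mono inter_subset_left inter_subset_left)
  set W : Set Y := ⋂ x ∈ f ⁻¹' {y}, f '' (B x) with hW
  have hWo : IsOpen W := (hfib y).isOpen_biInter fun x _ => hopen _ (hBo x)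
  have hWy : y ∈ W := mem_iInter₂.2 fun x hx => ⟨x, hBx x hx, hx⟩
  have hWz : ∀ y' ∈ W, ∀ x ∈ f ⁻¹' {y}, ∃ z, z ∈ f ⁻¹' {y'} ∩ B x := by
    intro y' hy' x hx
    rcases mem_iInter₂.1 hy' x hx with ⟨z, hzB, hzf⟩
    exact ⟨z, hzf, hzB⟩
  -- the injection from the fiber of `y` into the fiber of `y'`
  have hinj : ∀ y' ∈ W, ∃ g : X → X, Set.InjOn g (f ⁻¹' {y}) ∧
      (∀ x ∈ f ⁻¹' {y}, g x ∈ f ⁻¹' {y'} ∩ B x) := by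
    intro y' hy'
    have : ∀ x, ∃ z, x ∈ f ⁻¹' {y} → z ∈ f ⁻¹' {y'} ∩ B x := by
      intro x
      by_cases hx : x ∈ f ⁻¹' {y}
      · rcases hWz y' hy' x hx with ⟨z, hz⟩
        exact ⟨z, fun _ => hz⟩
      · exact ⟨x, fun h => absurd h hx⟩
    choose g hg using this
    refine ⟨g, ?_, fun x hx => hg x hx⟩
    intro x hx x' hx' hgx
    by_contra hne
    exact Set.disjoint_left.1 (hBdisj x hx x' hx' hne) (hg x hx).2 (hgx ▸ (hg x' hx').2)
  refine ⟨B, W, hBo, hBx, fun x => inter_subset_right, hBdisj, hWo, hWy, hWz, ?_, ?_⟩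
  · intro y' hy'
    obtain ⟨g, hginj, hgmem⟩ := hinj y' hy'
    calc (f ⁻¹' {y}).ncard = (g '' (f ⁻¹' {y})).ncard := (Set.ncard_image_of_injOn hginj).symm
      _ ≤ (f ⁻¹' {y'}).ncard := Set.ncard_le_ncard
          (by rintro z ⟨x, hx, rfl⟩; exact (hgmem x hx).1) (hfib y')
  · intro y' hy' hle
    obtain ⟨g, hginj, hgmem⟩ := hinj y' hy'
    have himg : g '' (f ⁻¹' {y}) = f ⁻¹' {y'} := by
      refine Set.eq_of_subset_of_ncard_le
        (by rintro z ⟨x, hx, rfl⟩; exact (hgmem x hx).1) ?_ (hfib y')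
      rw [Set.ncard_image_of_injOn hginj]
      exact hle
    constructor
    · intro z hz
      rw [← himg] at hz
      rcases hz with ⟨x, hx, rfl⟩
      exact ⟨x, hx, (hgmem x hx).2⟩
    · intro x hx z hz z' hz'
      have hzT : z ∈ g '' (f ⁻¹' {y}) := himg ▸ hz.1
      have hz'T : z' ∈ g '' (f ⁻¹' {y}) := himg ▸ hz'.1
      rcases hzT with ⟨x₁, hx₁, rfl⟩
      rcases hz'T with ⟨x₂, hx₂, rfl⟩
      have hxx₁ : x₁ = x := by
        by_contra hne
        exact Set.disjoint_left.1 (hBdisj x₁ hx₁ x hx hne) (hgmem x₁ hx₁).2 hz.2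
      have hxx₂ : x₂ = x := by
        by_contra hne
        exact Set.disjoint_left.1 (hBdisj x₂ hx₂ x hx hne) (hgmem x₂ hx₂).2 hz'.2
      rw [hxx₁, hxx₂]

/-- Fiber-cardinality sublevels are closed. -/
lemma isClosed_Yk (hopen : IsOpenMap f) (hfib : ∀ y : Y, (f ⁻¹' {y}).Finite) (k : ℕ) :
    IsClosed {y : Y | (f ⁻¹' {y}).ncard ≤ k} := by
  rw [← isOpen_compl_iff, isOpen_iff_mem_nhds]
  intro y hy
  simp only [mem_compl_iff, mem_setOf_eq, not_le] at hy
  obtain ⟨B, W, -, -, -, -, hWo, hWy, -, hmono, -⟩ := master hopen hfib y (fun _ => univ)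
    (fun x _ => mem_univ x) (fun _ => isOpen_univ)
  refine Filter.mem_of_superset (hWo.mem_nhds hWy) ?_
  intro y' hy'
  simp only [mem_compl_iff, mem_setOf_eq, not_le]
  exact lt_of_lt_of_le hy (hmono y' hy')


/-- Direction X → Y, local piece: each level set of the fiber cardinality has `RelDim ≤ n`. -/
lemma relDim_Ak (hcont : Continuous f) (hopen : IsOpenMap f)
    (hfib : ∀ y : Y, (f ⁻¹' {y}).Finite) (hX : RelDim (univ : Set X) n) (k : ℕ) :
    RelDim {y : Y | (f ⁻¹' {y}).ncard = k + 1} n := by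
  classical
  set A : Set Y := {y | (f ⁻¹' {y}).ncard = k + 1} with hA
  have hstr : ∀ y : ↥A, ∃ (B : X → Set X) (W : Set Y),
      (∀ x, IsOpen (B x)) ∧ (∀ x ∈ f ⁻¹' {(y : Y)}, x ∈ B x) ∧ (∀ x, B x ⊆ univ) ∧
      (∀ x ∈ f ⁻¹' {(y : Y)}, ∀ x' ∈ f ⁻¹' {(y : Y)}, x ≠ x' → Disjoint (B x) (B x')) ∧
      IsOpen W ∧ (y : Y) ∈ W ∧
      (∀ y' ∈ W, ∀ x ∈ f ⁻¹' {(y : Y)}, ∃ z, z ∈ f ⁻¹' {y'} ∩ B x) ∧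
      (∀ y' ∈ W, (f ⁻¹' {(y : Y)}).ncard ≤ (f ⁻¹' {y'}).ncard) ∧
      (∀ y' ∈ W, (f ⁻¹' {y'}).ncard ≤ (f ⁻¹' {(y : Y)}).ncard →
        (∀ z ∈ f ⁻¹' {y'}, ∃ x ∈ f ⁻¹' {(y : Y)}, z ∈ B x) ∧
        (∀ x ∈ f ⁻¹' {(y : Y)}, ∀ z ∈ f ⁻¹' {y'} ∩ B x, ∀ z' ∈ f ⁻¹' {y'} ∩ B x, z = z')) :=
    fun y => master hopen hfib (y : Y) (fun _ => univ) (fun x _ => mem_univ x)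
      (fun _ => isOpen_univ)
  choose B W hBo hBx hBsub hBdisj hWo hWy hWz hWmono hWstr using hstr
  refine loc_glob_rel (S := A) (fun y : ↥A => W y) hWo ?_ ?_
  · intro y hy
    exact mem_iUnion.2 ⟨⟨y, hy⟩, hWy ⟨y, hy⟩⟩
  · intro y
    -- RelDim (A ∩ W y) n
    have h2 : (f ⁻¹' {(y : Y)}).ncard = k + 1 := y.2
    have hfibne : (f ⁻¹' {(y : Y)}).Nonempty := (Set.ncard_pos (hfib _)).1 (by omega)
    obtain ⟨x₀, hx₀⟩ := hfibne
    intro ι G hGo hGc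
    set P : Set X := B y x₀ ∩ f ⁻¹' (A ∩ W y) with hP
    obtain ⟨V, hVo, hVs, hVc, hVe⟩ := (hX.mono (subset_univ P)).elim
      (fun j => f ⁻¹' (G j)) (fun j => (hGo j).preimage hcont)
      (by
        rintro p ⟨hpB, hpf⟩
        rcases mem_iUnion.1 (hGc hpf) with ⟨j, hj⟩
        exact mem_iUnion.2 ⟨j, hj⟩)
    -- the unique fiber point in `B y x₀` over a point of `A ∩ W y`
    have huniq : ∀ y' ∈ A ∩ W y, ∃ z, z ∈ f ⁻¹' {y'} ∩ B y x₀ ∧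
        ∀ w ∈ f ⁻¹' {y'} ∩ B y x₀, w = z := by
      rintro y' ⟨hy'A, hy'W⟩
      obtain ⟨z, hz⟩ := hWz y y' hy'W x₀ hx₀
      have hle : (f ⁻¹' {y'}).ncard ≤ (f ⁻¹' {(y : Y)}).ncard := by
        have h1 : (f ⁻¹' {y'}).ncard = k + 1 := hy'A
        have h2' : (f ⁻¹' {(y : Y)}).ncard = k + 1 := y.2
        omega
      refine ⟨z, hz, fun w hw => (hWstr y y' hy'W hle).2 x₀ hx₀ w hw z hz⟩
    refine ⟨fun j => f '' (V j ∩ B y x₀), fun j => hopen _ ((hVo j).inter (hBo y x₀)),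
      ?_, ?_, ?_⟩
    · intro j
      rw [Set.image_subset_iff]
      exact inter_subset_left.trans (hVs j)
    · rintro y' hy'
      obtain ⟨z, ⟨hzf, hzB⟩, -⟩ := huniq y' hy'
      have hzP : z ∈ P := ⟨hzB, by rwa [Set.mem_preimage, hzf]⟩
      rcases mem_iUnion.1 (hVc hzP) with ⟨j, hj⟩
      exact mem_iUnion.2 ⟨j, z, ⟨hj, hzB⟩, hzf⟩
    · intro y' hy'
      obtain ⟨z, ⟨hzf, hzB⟩, hzu⟩ := huniq y' hy'
      have hzP : z ∈ P := ⟨hzB, by rwa [Set.mem_preimage, hzf]⟩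
      refine le_trans (Set.encard_le_encard ?_) (hVe z hzP)
      rintro j ⟨w, ⟨hwV, hwB⟩, hwf⟩
      have hwz : w = z := hzu w ⟨by rw [Set.mem_preimage, hwf]; rfl, hwB⟩
      rw [mem_setOf_eq, ← hwz]
      exact hwV

/-- Direction X → Y. -/
lemma dim_Y_of_X (hcont : Continuous f) (hopen : IsOpenMap f)
    (hsurj : Function.Surjective f) (hfib : ∀ y : Y, (f ⁻¹' {y}).Finite)
    (hX : RelDim (univ : Set X) n) : RelDim (univ : Set Y) n := by
  classical
  have hfs : ∀ k : ℕ, ∃ Cl : ℕ → Set Y, (∀ j, IsClosed (Cl j)) ∧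
      (∀ j, Cl j ⊆ {y : Y | (f ⁻¹' {y}).ncard ≤ k}ᶜ) ∧
      ⋃ j, Cl j = {y : Y | (f ⁻¹' {y}).ncard ≤ k}ᶜ := fun k =>
    open_fsigma (isClosed_Yk hopen hfib k).isOpen_compl
  choose Cl hClc hClsub hClU using hfs
  refine cst_univ (fun m => {y : Y | (f ⁻¹' {y}).ncard ≤ (Nat.pairEquiv.symm m).1 + 1} ∩
      Cl (Nat.pairEquiv.symm m).1 (Nat.pairEquiv.symm m).2)
    (fun m => (isClosed_Yk hopen hfib _).inter (hClc _ _)) ?_ ?_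
  · apply eq_univ_of_forall
    intro y
    have hpos : 0 < (f ⁻¹' {y}).ncard := (Set.ncard_pos (hfib y)).2 ⟨(hsurj y).choose, (hsurj y).choose_spec⟩
    set k := (f ⁻¹' {y}).ncard - 1 with hk
    have hyk : y ∈ {y : Y | (f ⁻¹' {y}).ncard ≤ k}ᶜ := by
      simp only [mem_compl_iff, mem_setOf_eq, not_le, hk]
      omega
    rw [← hClU k] at hyk
    rcases mem_iUnion.1 hyk with ⟨j, hj⟩
    refine mem_iUnion.2 ⟨Nat.pairEquiv (k, j), ?_⟩
    rw [Equiv.symm_apply_apply]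
    exact ⟨by simp only [mem_setOf_eq]; omega, hj⟩
  · intro m
    refine (relDim_Ak hcont hopen hfib hX (Nat.pairEquiv.symm m).1).mono ?_
    rintro y ⟨hy1, hy2⟩
    have hy3 := hClsub _ _ hy2
    simp only [mem_compl_iff, mem_setOf_eq, not_le] at hy1 hy3 ⊢
    omega

/-- Direction Y → X, local piece. -/
lemma relDim_Ek (hcont : Continuous f) (hopen : IsOpenMap f)
    (hfib : ∀ y : Y, (f ⁻¹' {y}).Finite) (hY : RelDim (univ : Set Y) n) (k : ℕ) :
    RelDim (f ⁻¹' {y : Y | (f ⁻¹' {y}).ncard = k + 1}) n := by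
  classical
  set A : Set Y := {y | (f ⁻¹' {y}).ncard = k + 1} with hA
  intro ι G hGo hGc
  have hj : ∀ (y : ↥A) (x : X), x ∈ f ⁻¹' {(y : Y)} → ∃ j, x ∈ G j := by
    rintro y x hx
    have : x ∈ f ⁻¹' A := by
      rw [Set.mem_preimage]
      rw [Set.mem_preimage, Set.mem_singleton_iff] at hx
      rw [hx]
      exact y.2
    exact mem_iUnion.1 (hGc this)
  choose jsel hjsel using hj
  have jsel_congr : ∀ (y y' : ↥A) (x : X) (h : x ∈ f ⁻¹' {(y : Y)})
      (h' : x ∈ f ⁻¹' {(y' : Y)}), y = y' → jsel y x h = jsel y' x h' := by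
    rintro y y' x h h' rfl
    rfl
  set u : ↥A → X → Set X := fun y x =>
    if hx : x ∈ f ⁻¹' {(y : Y)} then G (jsel y x hx) else univ with hu
  have huo : ∀ y x, IsOpen (u y x) := by
    intro y x
    rw [hu]
    by_cases hx : x ∈ f ⁻¹' {(y : Y)}
    · simpa only [dif_pos hx] using hGo _
    · simpa only [dif_neg hx] using isOpen_univ
  have hux : ∀ (y : ↥A), ∀ x ∈ f ⁻¹' {(y : Y)}, x ∈ u y x := by
    intro y x hx
    rw [hu]
    simp only [dif_pos hx]
    exact hjsel y x hx
  have hstr := fun y : ↥A => master hopen hfib (y : Y) (u y) (hux y) (huo y)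
  choose B W hBo hBx hBsub hBdisj hWo hWy hWz hWmono hWstr using hstr
  obtain ⟨V, hVo, hVs, hVc, hVe⟩ := (hY.mono (subset_univ A)).elim
    (fun y : ↥A => W y) hWo (fun y hy => mem_iUnion.2 ⟨⟨y, hy⟩, hWy ⟨y, hy⟩⟩)
  refine ⟨fun j => ⋃ (y : ↥A) (x : X) (hx : x ∈ f ⁻¹' {(y : Y)})
      (_ : jsel y x hx = j), (f ⁻¹' (V y) ∩ B y x), ?_, ?_, ?_, ?_⟩
  · intro j
    refine isOpen_iUnion fun y => isOpen_iUnion fun x => isOpen_iUnion fun hx =>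
      isOpen_iUnion fun _ => ((hVo y).preimage hcont).inter (hBo y x)
  · intro j
    refine iUnion_subset fun y => iUnion_subset fun x => iUnion_subset fun hx =>
      iUnion_subset fun hjx => ?_
    refine inter_subset_right.trans ?_
    refine (hBsub y x).trans ?_
    rw [hu]
    simp only [dif_pos hx]
    rw [hjx]
  · intro x' hx'
    set y' : Y := f x' with hy'
    have hy'A : y' ∈ A := hx'
    rcases mem_iUnion.1 (hVc hy'A) with ⟨y, hy⟩
    have hy'W : y' ∈ W y := hVs y hy
    have hle : (f ⁻¹' {y'}).ncard ≤ (f ⁻¹' {(y : Y)}).ncard := by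
      have h1 : (f ⁻¹' {y'}).ncard = k + 1 := hy'A
      have h2 : (f ⁻¹' {(y : Y)}).ncard = k + 1 := y.2
      omega
    obtain ⟨x, hxf, hx'B⟩ := (hWstr y y' hy'W hle).1 x' rfl
    exact mem_iUnion.2 ⟨jsel y x hxf, mem_iUnion.2 ⟨y, mem_iUnion.2 ⟨x, mem_iUnion.2 ⟨hxf,
      mem_iUnion.2 ⟨rfl, ⟨hy, hx'B⟩⟩⟩⟩⟩⟩
  · intro x' hx'
    have hy'A : f x' ∈ A := hx'
    refine le_trans ?_ (hVe (f x') hy'A)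
    have hw : ∀ j, x' ∈ ⋃ (y : ↥A) (x : X) (hx : x ∈ f ⁻¹' {(y : Y)})
        (_ : jsel y x hx = j), (f ⁻¹' (V y) ∩ B y x) →
        ∃ (y : ↥A) (x : X) (hx : x ∈ f ⁻¹' {(y : Y)}),
          jsel y x hx = j ∧ x' ∈ f ⁻¹' (V y) ∩ B y x := by
      intro j hj
      rcases mem_iUnion.1 hj with ⟨y, hy⟩
      rcases mem_iUnion.1 hy with ⟨x, hx⟩
      rcases mem_iUnion.1 hx with ⟨hxf, hrest⟩
      rcases mem_iUnion.1 hrest with ⟨hjx, hmem⟩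
      exact ⟨y, x, hxf, hjx, hmem⟩
    refine encard_index_le (fun j hj => (hw j hj).choose) ?_ ?_
    · intro j hj
      obtain ⟨x, hx, -, hmem⟩ := (hw j hj).choose_spec
      exact hmem.1
    · intro j₁ j₂ hj₁ hj₂ heq
      obtain ⟨x₁, hx₁, hje₁, hmem₁⟩ := (hw j₁ hj₁).choose_spec
      obtain ⟨x₂, hx₂, hje₂, hmem₂⟩ := (hw j₂ hj₂).choose_spec
      change (hw j₁ hj₁).choose = (hw j₂ hj₂).choose at heq
      set y₁ := (hw j₁ hj₁).choose with hy₁d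
      set y₂ := (hw j₂ hj₂).choose with hy₂d
      clear_value y₁ y₂
      subst heq
      have hx12 : x₁ = x₂ := by
        by_contra hne
        exact Set.disjoint_left.1 (hBdisj y₁ x₁ hx₁ x₂ hx₂ hne) hmem₁.2 hmem₂.2
      subst hx12
      rw [← hje₁, ← hje₂]
      exact jsel_congr _ _ _ _ _ (hy₁d.symm.trans hy₂d)

/-- Direction Y → X. -/
lemma dim_X_of_Y (hcont : Continuous f) (hopen : IsOpenMap f)
    (hfib : ∀ y : Y, (f ⁻¹' {y}).Finite)
    (hY : RelDim (univ : Set Y) n) : RelDim (univ : Set X) n := by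
  classical
  have hfs : ∀ k : ℕ, ∃ Cl : ℕ → Set X, (∀ j, IsClosed (Cl j)) ∧
      (∀ j, Cl j ⊆ (f ⁻¹' {y : Y | (f ⁻¹' {y}).ncard ≤ k})ᶜ) ∧
      ⋃ j, Cl j = (f ⁻¹' {y : Y | (f ⁻¹' {y}).ncard ≤ k})ᶜ := fun k =>
    open_fsigma (((isClosed_Yk hopen hfib k).preimage hcont)).isOpen_compl
  choose Cl hClc hClsub hClU using hfs
  refine cst_univ (fun m => f ⁻¹' {y : Y | (f ⁻¹' {y}).ncard ≤ (Nat.pairEquiv.symm m).1 + 1} ∩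
      Cl (Nat.pairEquiv.symm m).1 (Nat.pairEquiv.symm m).2)
    (fun m => ((isClosed_Yk hopen hfib _).preimage hcont).inter (hClc _ _)) ?_ ?_
  · apply eq_univ_of_forall
    intro x
    have hpos : 0 < (f ⁻¹' {f x}).ncard := (Set.ncard_pos (hfib (f x))).2 ⟨x, rfl⟩
    set k := (f ⁻¹' {f x}).ncard - 1 with hk
    have hyk : x ∈ (f ⁻¹' {y : Y | (f ⁻¹' {y}).ncard ≤ k})ᶜ := by
      simp only [mem_compl_iff, Set.mem_preimage, mem_setOf_eq, not_le, hk]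
      omega
    rw [← hClU k] at hyk
    rcases mem_iUnion.1 hyk with ⟨j, hj⟩
    refine mem_iUnion.2 ⟨Nat.pairEquiv (k, j), ?_⟩
    rw [Equiv.symm_apply_apply]
    refine ⟨?_, hj⟩
    simp only [Set.mem_preimage, mem_setOf_eq]
    omega
  · intro m
    refine (relDim_Ek hcont hopen hfib hY (Nat.pairEquiv.symm m).1).mono ?_
    rintro x ⟨hx1, hx2⟩
    have hx3 := hClsub _ _ hx2
    simp only [Set.mem_preimage, mem_setOf_eq] at hx1 ⊢
    simp only [mem_compl_iff, Set.mem_preimage, mem_setOf_eq, not_le] at hx3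
    omega

end Main
end DimAux


/-- A continuous open surjection between metric spaces with finite fibers
preserves the covering dimension. -/
theorem stmt_19 {X Y : Type*} [MetricSpace X] [MetricSpace Y] (f : X → Y)
    (hcont : Continuous f) (hopen : IsOpenMap f) (hsurj : Function.Surjective f)
    (hfib : ∀ y : Y, (f ⁻¹' {y}).Finite) :
    ∀ n : ℕ, CoverDimLE X n ↔ CoverDimLE Y n := by
  intro n
  rw [DimAux.coverDimLE_iff_relDim_univ, DimAux.coverDimLE_iff_relDim_univ]
  constructor
  · exact fun hX => DimAux.dim_Y_of_X hcont hopen hsurj hfib hX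
  · exact fun hY => DimAux.dim_X_of_Y hcont hopen hfib hY
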